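/- Let (X, E) be a structure in which E is a convex cone of functions X → [0,∞] containing the constant function 1, closed under the operation v ↦ v - γ when v ≥ γ for a constant γ ≥ 0 (i.e., if v ∈ E and v ≥ γ then v - γ ∈ E). For a set A ⊆ X define R₁^A := inf { v ∈ E : v ≥ 1 on A } pointwise, and assume R₁^A ∈ E. Then either R₁^A = 1 identically on X, or inf_{x ∈ X} R₁^A(x) = 0. -/

import Mathlib

open scoped ENNReal

theorem stmt_11 {X : Type*} (E : Set (X → ℝ≥0∞))
    (h1 : (fun _ => (1 : ℝ≥0∞)) ∈ E)
    (hadd : ∀ v ∈ E, ∀ w ∈ E, v + w ∈ E)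
    (hsmul : ∀ v ∈ E, ∀ c : ℝ≥0∞, (fun x => c * v x) ∈ E)
    (hsub : ∀ v ∈ E, ∀ γ : ℝ≥0∞, (∀ x, γ ≤ v x) → (fun x => v x - γ) ∈ E)
    (A : Set X) (R : X → ℝ≥0∞)
    (hR : R = fun x => ⨅ v ∈ {v ∈ E | ∀ a ∈ A, 1 ≤ v a}, v x)
    (hRE : R ∈ E) :
    (∀ x, R x = 1) ∨ (⨅ x, R x = 0) := by
  by_cases hX : Nonempty X
  case neg => exact Or.inl fun x => absurd ⟨x⟩ hX
  set γ := ⨅ x, R x with hγdef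
  have hRA : ∀ a ∈ A, 1 ≤ R a := by
    intro a ha
    rw [hR]
    exact le_iInf₂ fun v hv => hv.2 a ha
  have hR1 : ∀ x, R x ≤ 1 := by
    intro x
    rw [hR]
    exact iInf₂_le_of_le (fun _ => 1) ⟨h1, fun a _ => le_rfl⟩ le_rfl
  have hγR : ∀ x, γ ≤ R x := fun x => iInf_le _ x
  have hγ1 : γ ≤ 1 := le_trans (hγR hX.some) (hR1 hX.some)
  rcases eq_or_lt_of_le hγ1 with hγeq | hγlt
  · exact Or.inl fun x => le_antisymm (hR1 x) (hγeq ▸ hγR x)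
  · right
    by_contra hγ0
    have h1γ0 : (1 : ℝ≥0∞) - γ ≠ 0 := by
      simpa [tsub_eq_zero_iff_le, not_le] using hγlt
    have h1γtop : (1 : ℝ≥0∞) - γ ≠ ⊤ := by
      exact ne_top_of_le_ne_top ENNReal.one_ne_top tsub_le_self
    set c := ((1 : ℝ≥0∞) - γ)⁻¹ with hc
    have hwE : (fun x => c * (R x - γ)) ∈ E :=
      hsmul _ (hsub R hRE γ hγR) c
    have hwA : ∀ a ∈ A, 1 ≤ c * (R a - γ) := by
      intro a ha
      have h1 : (1 : ℝ≥0∞) - γ ≤ R a - γ := tsub_le_tsub_right (hRA a ha) γ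
      calc (1 : ℝ≥0∞) = c * ((1 : ℝ≥0∞) - γ) := (ENNReal.inv_mul_cancel h1γ0 h1γtop).symm
        _ ≤ c * (R a - γ) := mul_le_mul_right h1 c
    have hle : ∀ x, R x ≤ c * (R x - γ) := by
      intro x
      conv_lhs => rw [hR]
      exact iInf₂_le_of_le _ ⟨hwE, hwA⟩ le_rfl
    have hkey : ∀ x, ((1 : ℝ≥0∞) - γ) * γ ≤ R x - γ := by
      intro x
      calc ((1 : ℝ≥0∞) - γ) * γ ≤ ((1 : ℝ≥0∞) - γ) * R x := mul_le_mul_right (hγR x) _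
        _ ≤ ((1 : ℝ≥0∞) - γ) * (c * (R x - γ)) := mul_le_mul_right (hle x) _
        _ = (((1 : ℝ≥0∞) - γ) * c) * (R x - γ) := (mul_assoc _ _ _).symm
        _ = R x - γ := by rw [ENNReal.mul_inv_cancel h1γ0 h1γtop, one_mul]
    have hzero : ((1 : ℝ≥0∞) - γ) * γ = 0 := by
      refine le_antisymm ?_ zero_le
      refine ENNReal.le_of_forall_pos_le_add fun ε hε _ => ?_
      have hγtop : γ ≠ ⊤ := ne_top_of_le_ne_top ENNReal.one_ne_top hγ1
      have : γ < γ + ε := ENNReal.lt_add_right hγtop (by exact_mod_cast hε.ne')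
      obtain ⟨x, hx⟩ := iInf_lt_iff.mp this
      calc ((1 : ℝ≥0∞) - γ) * γ ≤ R x - γ := hkey x
        _ ≤ ε := tsub_le_iff_right.mpr (by rw [add_comm]; exact hx.le)
        _ ≤ 0 + ε := by rw [zero_add]
    exact absurd hzero (mul_ne_zero h1γ0 hγ0)
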